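/- Let 𝒳 and 𝒴 be measurable spaces, γ : 𝒳 × 𝒳 → ℝ and ℓ : 𝒴 × 𝒴 → ℝ bounded measurable kernels, and U_x, U_y probability measures on 𝒳 and 𝒴 respectively. For w = (x_1, x_2, y_1, y_2) ∈ 𝒳² × 𝒴² define h_HSIC(w, w') = (1/4) · h^γ((x_1,x_2),(x_1',x_2')) · h^ℓ((y_1,y_2),(y_1',y_2')), where for a kernel κ, h^κ((a,b),(a',b')) = κ(a,a') + κ(b,b') − κ(a,b') − κ(b,a'). Then for every w ∈ 𝒳² × 𝒴², ∫ h_HSIC(w, w') d(U_x ⊗ U_x ⊗ U_y ⊗ U_y)(w') = 0. In particular, under the null hypothesis of independence (where each quadruple w_i = (x_i, x_{i+n}, y_i, y_{i+n}) has law U_x ⊗ U_x ⊗ U_y ⊗ U_y), the core function h_HSIC of the HSIC U-statistic is first-order degenerate. -/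
import Mathlib


open MeasureTheory

lemma aux_integrable_fst {α : Type*} [MeasurableSpace α] (κ : α → α → ℝ)
    (hmeas : Measurable (Function.uncurry κ)) (M : ℝ) (hbd : ∀ a b, |κ a b| ≤ M)
    (μ : Measure α) [IsProbabilityMeasure μ] (a : α) :
    Integrable (fun p : α × α => κ a p.1) (μ.prod μ) := by
  refine Integrable.mono' (integrable_const M) ?_ ?_
  · exact ((hmeas.comp (measurable_const.prodMk measurable_fst)).aestronglyMeasurable)
  · exact Filter.Eventually.of_forall fun p => by simpa using hbd a p.1

lemma aux_integrable_snd {α : Type*} [MeasurableSpace α] (κ : α → α → ℝ)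
    (hmeas : Measurable (Function.uncurry κ)) (M : ℝ) (hbd : ∀ a b, |κ a b| ≤ M)
    (μ : Measure α) [IsProbabilityMeasure μ] (a : α) :
    Integrable (fun p : α × α => κ a p.2) (μ.prod μ) := by
  refine Integrable.mono' (integrable_const M) ?_ ?_
  · exact ((hmeas.comp (measurable_const.prodMk measurable_snd)).aestronglyMeasurable)
  · exact Filter.Eventually.of_forall fun p => by simpa using hbd a p.2

lemma aux_int_fst {α : Type*} [MeasurableSpace α] (κ : α → α → ℝ)
    (hmeas : Measurable (Function.uncurry κ)) (M : ℝ) (hbd : ∀ a b, |κ a b| ≤ M)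
    (μ : Measure α) [IsProbabilityMeasure μ] (a : α) :
    ∫ p : α × α, κ a p.1 ∂(μ.prod μ) = ∫ x, κ a x ∂μ := by
  rw [MeasureTheory.integral_prod _ (aux_integrable_fst κ hmeas M hbd μ a)]
  simp

lemma aux_int_snd {α : Type*} [MeasurableSpace α] (κ : α → α → ℝ)
    (hmeas : Measurable (Function.uncurry κ)) (M : ℝ) (hbd : ∀ a b, |κ a b| ≤ M)
    (μ : Measure α) [IsProbabilityMeasure μ] (a : α) :
    ∫ p : α × α, κ a p.2 ∂(μ.prod μ) = ∫ x, κ a x ∂μ := by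
  rw [MeasureTheory.integral_prod _ (aux_integrable_snd κ hmeas M hbd μ a)]
  simp

lemma aux_factor_zero {α : Type*} [MeasurableSpace α] (κ : α → α → ℝ)
    (hmeas : Measurable (Function.uncurry κ)) (M : ℝ) (hbd : ∀ a b, |κ a b| ≤ M)
    (μ : Measure α) [IsProbabilityMeasure μ] (a b : α) :
    ∫ p : α × α, (κ a p.1 + κ b p.2 - κ a p.2 - κ b p.1) ∂(μ.prod μ) = 0 := by
  have i1 := aux_integrable_fst κ hmeas M hbd μ a
  have i2 := aux_integrable_snd κ hmeas M hbd μ b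
  have i3 := aux_integrable_snd κ hmeas M hbd μ a
  have i4 := aux_integrable_fst κ hmeas M hbd μ b
  have h := integral_sub ((i1.add i2).sub i3) i4
  simp only [Pi.add_apply, Pi.sub_apply] at h
  have h2 := integral_sub (i1.add i2) i3
  simp only [Pi.add_apply, Pi.sub_apply] at h2
  rw [h, h2, integral_add i1 i2, aux_int_fst κ hmeas M hbd, aux_int_snd κ hmeas M hbd,
    aux_int_snd κ hmeas M hbd, aux_int_fst κ hmeas M hbd]
  ring

theorem hHSIC_first_order_degenerate
    {𝒳 𝒴 : Type*} [MeasurableSpace 𝒳] [MeasurableSpace 𝒴]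
    (γ : 𝒳 → 𝒳 → ℝ) (ℓ : 𝒴 → 𝒴 → ℝ)
    (hγmeas : Measurable (Function.uncurry γ))
    (hℓmeas : Measurable (Function.uncurry ℓ))
    (Mγ Mℓ : ℝ) (hγbd : ∀ a b, |γ a b| ≤ Mγ) (hℓbd : ∀ a b, |ℓ a b| ≤ Mℓ)
    (Ux : Measure 𝒳) [IsProbabilityMeasure Ux]
    (Uy : Measure 𝒴) [IsProbabilityMeasure Uy] :
    ∀ w : (𝒳 × 𝒳) × (𝒴 × 𝒴),
      (∫ w' : (𝒳 × 𝒳) × (𝒴 × 𝒴),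
          (1 / 4 : ℝ) *
            ((γ w.1.1 w'.1.1 + γ w.1.2 w'.1.2 - γ w.1.1 w'.1.2 - γ w.1.2 w'.1.1) *
              (ℓ w.2.1 w'.2.1 + ℓ w.2.2 w'.2.2 - ℓ w.2.1 w'.2.2 - ℓ w.2.2 w'.2.1))
          ∂((Ux.prod Ux).prod (Uy.prod Uy))) = 0 := by
  intro w
  rw [integral_const_mul]
  have := integral_prod_mul (μ := Ux.prod Ux) (ν := Uy.prod Uy)
    (f := fun p : 𝒳 × 𝒳 => γ w.1.1 p.1 + γ w.1.2 p.2 - γ w.1.1 p.2 - γ w.1.2 p.1)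
    (g := fun q : 𝒴 × 𝒴 => ℓ w.2.1 q.1 + ℓ w.2.2 q.2 - ℓ w.2.1 q.2 - ℓ w.2.2 q.1)
  rw [this, aux_factor_zero γ hγmeas Mγ hγbd Ux w.1.1 w.1.2]
  ring
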